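/- Let 𝔽 be a field, let α_j, β_j, γ_j ∈ 𝔽 with α_j ≠ 0 for j ≥ 0, and let φ_{−1}(λ) = 0, φ_0(λ) = 1 and α_jφ_{j+1}(λ) = (λ−β_j)φ_j(λ) − γ_jφ_{j−1}(λ) for j ≥ 0. Let P(λ) = Σ_{i=0}^{k} P_iφ_i(λ) ∈ 𝔽[λ]^{p×m} with k ≥ 2, and let C_φ(λ) be the comrade pencil of P(λ). Partition C_φ(λ) = [[−C(λ), D(λ)],[A(λ), B(λ)]], where the first block row is [−C(λ), D(λ)] with D(λ) = P_0 its last block column, and the remaining block rows form [A(λ), B(λ)] with A(λ) ∈ 𝔽[λ]^{(k−1)m×(k−1)m} consisting of their first k−1 block columns. Then A(λ) is unimodular and the Schur complement D(λ) + C(λ)A(λ)⁻¹B(λ) equals P(λ); consequently C_φ(λ) is a linearization of P(λ). -/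
import Mathlib


open Polynomial Matrix

/-- The comrade pencil `C_φ(λ)` of
`P(λ) = Σ_{i=0}^{k} P_i φ_i(λ)`, written in a polynomial basis satisfying the three-term
recurrence `α_j φ_{j+1}(λ) = (λ - β_j) φ_j(λ) - γ_j φ_{j-1}(λ)` (with `φ_{-1} = 0`,
`φ_0 = 1`, `α_j ≠ 0`), partitioned as `[[-C(λ), D(λ)], [A(λ), B(λ)]]`, has `A(λ)` unimodular
and Schur complement `D + C A⁻¹ B = P`; consequently `C_φ(λ)` is a linearization of `P`. -/
theorem stmt_9 {F : Type*} [Field F] {p m k : ℕ} (hk : 2 ≤ k)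
    (α β γ : ℕ → F) (hα : ∀ j, α j ≠ 0)
    (φ : ℕ → Polynomial F)
    (hφ0 : φ 0 = 1)
    (hφ1 : Polynomial.C (α 0) * φ 1 = (Polynomial.X - Polynomial.C (β 0)) * φ 0)
    (hφrec : ∀ j : ℕ, Polynomial.C (α (j+1)) * φ (j+2)
      = (Polynomial.X - Polynomial.C (β (j+1))) * φ (j+1) - Polynomial.C (γ (j+1)) * φ j)
    (Pc : ℕ → Matrix (Fin p) (Fin m) F)
    (P : Matrix (Fin p) (Fin m) (Polynomial F))
    (hP : P = ∑ i ∈ Finset.range (k+1), φ i • (Pc i).map Polynomial.C)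
    -- `-C(λ)`: the first `k-1` block columns of the first block row of `C_φ(λ)`
    (Cm : Matrix (Fin p) (Fin (k-1) × Fin m) (Polynomial F))
    (hCm : Cm = Matrix.of fun i c =>
      if (c.1 : ℕ) = 0 then
        Polynomial.C ((α (k-1))⁻¹) * ((Polynomial.X - Polynomial.C (β (k-1))) *
          Polynomial.C (Pc k i c.2)) + Polynomial.C (Pc (k-1) i c.2)
      else if (c.1 : ℕ) = 1 then
        Polynomial.C (Pc (k-2) i c.2) - Polynomial.C (γ (k-1) * (α (k-1))⁻¹ * Pc k i c.2)
      else Polynomial.C (Pc (k-1-(c.1 : ℕ)) i c.2))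
    -- `D(λ)`: the last block column of the first block row of `C_φ(λ)`
    (D : Matrix (Fin p) (Fin m) (Polynomial F))
    (hD : D = Matrix.of fun i j =>
      if k-1 = 1 then
        Polynomial.C (Pc (k-2) i j) - Polynomial.C (γ (k-1) * (α (k-1))⁻¹ * Pc k i j)
      else Polynomial.C (Pc 0 i j))
    -- `A(λ)`: the first `k-1` block columns of the lower block rows
    (A : Matrix (Fin (k-1) × Fin m) (Fin (k-1) × Fin m) (Polynomial F))
    (hA : A = Matrix.of fun r c =>
      if r.2 = c.2 then
        (if c.1 = r.1 then -Polynomial.C (α (k-2-(r.1 : ℕ)))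
         else if (c.1 : ℕ) = (r.1 : ℕ) + 1 then Polynomial.X - Polynomial.C (β (k-2-(r.1 : ℕ)))
         else if (c.1 : ℕ) = (r.1 : ℕ) + 2 then -Polynomial.C (γ (k-2-(r.1 : ℕ)))
         else 0)
      else 0)
    -- `B(λ)`: the last block column of the lower block rows
    (B : Matrix (Fin (k-1) × Fin m) (Fin m) (Polynomial F))
    (hB : B = Matrix.of fun r j =>
      if r.2 = j then
        (if (r.1 : ℕ) + 1 = k-1 then Polynomial.X - Polynomial.C (β (k-2-(r.1 : ℕ)))
         else if (r.1 : ℕ) + 2 = k-1 then -Polynomial.C (γ (k-2-(r.1 : ℕ)))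
         else 0)
      else 0)
    -- the comrade pencil `C_φ(λ) = [[-C, D], [A, B]]`
    (Cφ : Matrix (Fin p ⊕ (Fin (k-1) × Fin m)) ((Fin (k-1) × Fin m) ⊕ Fin m) (Polynomial F))
    (hCφ : Cφ = Matrix.fromBlocks Cm D A B) :
    -- `A(λ)` is unimodular
    IsUnit A.det ∧
    -- the Schur complement `D + C A⁻¹ B` equals `P` (here `C = -Cm`)
    D + (-Cm) * A⁻¹ * B = P ∧
    -- `C_φ(λ)` is a linearization of `P(λ)`
    (∃ (U₁ : Matrix (Fin p ⊕ (Fin (k-1) × Fin m)) (Fin p ⊕ (Fin (k-1) × Fin m)) (Polynomial F))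
       (V₁ : Matrix ((Fin (k-1) × Fin m) ⊕ Fin m) (Fin m ⊕ (Fin (k-1) × Fin m)) (Polynomial F)),
       IsUnit U₁.det ∧
       IsUnit ((V₁.submatrix (Equiv.sumComm (Fin m) (Fin (k-1) × Fin m)) id).det) ∧
       U₁ * Cφ * V₁ = Matrix.fromBlocks P 0 0
         (1 : Matrix (Fin (k-1) × Fin m) (Fin (k-1) × Fin m) (Polynomial F))) := by
  obtain ⟨q, rfl⟩ : ∃ q, k = q + 2 := ⟨k - 2, by omega⟩
  clear hk
  -- the explicit solution `X = A⁻¹ * B`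
  set X : Matrix (Fin (q + 2 - 1) × Fin m) (Fin m) (Polynomial F) :=
    Matrix.of (fun r j => if r.2 = j then -φ (q + 1 - (r.1 : ℕ)) else 0) with hXdef
  -- `φ (q+2)` in terms of lower ones
  have h2 : φ (q + 2) = Polynomial.C ((α (q + 1))⁻¹) *
      ((Polynomial.X - Polynomial.C (β (q + 1))) * φ (q + 1)
        - Polynomial.C (γ (q + 1)) * φ q) := by
    have h := hφrec q
    have h' : Polynomial.C ((α (q + 1))⁻¹) * (Polynomial.C (α (q + 1)) * φ (q + 2))
        = φ (q + 2) := by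
      rw [← mul_assoc, ← Polynomial.C_mul, inv_mul_cancel₀ (hα _), Polynomial.C_1, one_mul]
    rw [← h', h]
  -- A is unimodular
  have hAdet : IsUnit A.det := by
    set e : Fin ((q + 1) * m) ≃ Fin (q + 1) × Fin m :=
      (finProdFinEquiv : Fin (q + 1) × Fin m ≃ Fin ((q + 1) * m)).symm with he
    have h1 : A.det = (A.submatrix e e).det := (Matrix.det_submatrix_equiv_self e A).symm
    have hval : ∀ i : Fin ((q + 1) * m),
        (i : ℕ) = ((e i).2 : ℕ) + m * ((e i).1 : ℕ) := by
      intro i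
      conv_lhs => rw [← finProdFinEquiv.apply_symm_apply i]
      rfl
    have htri : (A.submatrix e e).BlockTriangular id := by
      intro i j hij
      have hlt : (j : ℕ) < (i : ℕ) := hij
      have hi := hval i
      have hj := hval j
      simp only [Matrix.submatrix_apply, hA, Matrix.of_apply]
      rcases eq_or_ne (e i).2 (e j).2 with hc0 | hc0
      · have hc0v : ((e i).2 : ℕ) = ((e j).2 : ℕ) := congrArg Fin.val hc0
        have hm : 0 < m := (e i).2.pos
        have n1 : ¬((e j).1 = (e i).1) := by
          intro h
          have : j = i := e.injective (Prod.ext h hc0.symm)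
          omega
        have n2 : ¬(((e j).1 : ℕ) = ((e i).1 : ℕ) + 1) := by
          intro h
          have : m * ((e j).1 : ℕ) = m * ((e i).1 : ℕ) + m := by rw [h]; ring
          omega
        have n3 : ¬(((e j).1 : ℕ) = ((e i).1 : ℕ) + 2) := by
          intro h
          have : m * ((e j).1 : ℕ) = m * ((e i).1 : ℕ) + 2 * m := by rw [h]; ring
          omega
        rw [if_pos hc0, if_neg n1, if_neg n2, if_neg n3]
      · rw [if_neg hc0]
    rw [h1, Matrix.det_of_upperTriangular htri]
    refine Finset.prod_induction _ IsUnit (fun a b ha hb => ha.mul hb) isUnit_one ?_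
    intro i _
    simp only [Matrix.submatrix_apply, hA, Matrix.of_apply, if_pos rfl]
    exact (Polynomial.isUnit_C.mpr (isUnit_iff_ne_zero.mpr (hα _))).neg
  -- A * X = B
  have hAX : A * X = B := by
    ext r j : 1
    rw [Matrix.mul_apply, hB]
    by_cases hr2 : r.2 = j
    · subst hr2
      rw [Fintype.sum_prod_type]
      simp only [hA, hXdef, Matrix.of_apply, ite_mul, zero_mul, mul_ite, mul_zero,
        Finset.sum_ite_eq, Finset.sum_ite_eq', Finset.mem_univ, if_true, if_pos rfl]
      simp only [Fin.ext_iff]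
      simp only [show q + 2 - 2 = q from rfl]
      rw [Fin.sum_univ_eq_sum_range (fun t =>
        if t = ((r.1 : ℕ)) then -Polynomial.C (α (q - (r.1 : ℕ))) * -φ (q + 1 - t)
        else if t = (r.1 : ℕ) + 1 then
          (Polynomial.X - Polynomial.C (β (q - (r.1 : ℕ)))) * -φ (q + 1 - t)
        else if t = (r.1 : ℕ) + 2 then -Polynomial.C (γ (q - (r.1 : ℕ))) * -φ (q + 1 - t)
        else 0) (q + 2 - 1)]
      simp only [show q + 2 - 1 = q + 1 from rfl]
      have hrv : (r.1 : ℕ) < q + 1 := r.1.isLt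
      have hsplit : ∀ t ∈ Finset.range (q + 1),
          (if t = (r.1 : ℕ) then -Polynomial.C (α (q - (r.1 : ℕ))) * -φ (q + 1 - t)
           else if t = (r.1 : ℕ) + 1 then
             (Polynomial.X - Polynomial.C (β (q - (r.1 : ℕ)))) * -φ (q + 1 - t)
           else if t = (r.1 : ℕ) + 2 then
             -Polynomial.C (γ (q - (r.1 : ℕ))) * -φ (q + 1 - t)
           else 0)
          = (if t = (r.1 : ℕ) then Polynomial.C (α (q - (r.1 : ℕ))) * φ (q + 1 - t) else 0)
            + ((if t = (r.1 : ℕ) + 1 then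
                -((Polynomial.X - Polynomial.C (β (q - (r.1 : ℕ)))) * φ (q + 1 - t)) else 0)
            + (if t = (r.1 : ℕ) + 2 then Polynomial.C (γ (q - (r.1 : ℕ))) * φ (q + 1 - t)
               else 0)) := by
        intro t _
        split_ifs with h1 h2 h3 <;> first | ring1 | (exfalso; omega)
      rw [Finset.sum_congr rfl hsplit, Finset.sum_add_distrib, Finset.sum_add_distrib]
      simp only [Finset.sum_ite_eq', Finset.mem_range]
      rcases Nat.lt_or_ge ((r.1 : ℕ) + 2) (q + 1) with hc | hc
      · -- generic row: everything cancels
        rw [if_pos hrv, if_pos (by omega : (r.1 : ℕ) + 1 < q + 1), if_pos hc,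
          if_neg (by omega : ¬((r.1 : ℕ) + 1 = q + 1)),
          if_neg (by omega : ¬((r.1 : ℕ) + 2 = q + 1))]
        obtain ⟨d, e1, e2, e3, e4⟩ : ∃ d, q - (r.1 : ℕ) = d + 1 ∧ q + 1 - (r.1 : ℕ) = d + 2
            ∧ q + 1 - ((r.1 : ℕ) + 1) = d + 1 ∧ q + 1 - ((r.1 : ℕ) + 2) = d :=
          ⟨q - (r.1 : ℕ) - 1, by omega⟩
        rw [e1, e2, e3, e4]
        linear_combination hφrec d
      rcases Nat.lt_or_ge ((r.1 : ℕ) + 1) (q + 1) with hc2 | hc2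
      · -- second-to-last row
        rw [if_pos hrv, if_pos hc2, if_neg (by omega : ¬((r.1 : ℕ) + 2 < q + 1)),
          if_neg (by omega : ¬((r.1 : ℕ) + 1 = q + 1)),
          if_pos (by omega : (r.1 : ℕ) + 2 = q + 1)]
        obtain ⟨e1, e2, e3⟩ : q - (r.1 : ℕ) = 1 ∧ q + 1 - (r.1 : ℕ) = 2
            ∧ q + 1 - ((r.1 : ℕ) + 1) = 1 := by omega
        rw [e1, e2, e3]
        linear_combination hφrec 0 - Polynomial.C (γ 1) * hφ0
      · -- last row
        rw [if_pos hrv, if_neg (by omega : ¬((r.1 : ℕ) + 1 < q + 1)),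
          if_neg (by omega : ¬((r.1 : ℕ) + 2 < q + 1)),
          if_pos (by omega : (r.1 : ℕ) + 1 = q + 1)]
        obtain ⟨e1, e2⟩ : q - (r.1 : ℕ) = 0 ∧ q + 1 - (r.1 : ℕ) = 1 := by omega
        rw [e1, e2]
        linear_combination hφ1 + (Polynomial.X - Polynomial.C (β 0)) * hφ0
    · simp only [hA, hXdef, Matrix.of_apply, Fintype.sum_prod_type, ite_mul, zero_mul,
        mul_ite, mul_zero, Finset.sum_ite_eq, Finset.sum_ite_eq', Finset.mem_univ, if_true,
        if_neg hr2]
      simp [hr2, Ne.symm hr2]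
  -- the key Schur complement identity
  have hkey : D + -(Cm * X) = P := by
    ext i j : 1
    have hL : (Cm * X) i j = -∑ t ∈ Finset.range (q + 1),
        (if t = 0 then
          Polynomial.C ((α (q + 1))⁻¹) * ((Polynomial.X - Polynomial.C (β (q + 1))) *
            Polynomial.C (Pc (q + 2) i j)) + Polynomial.C (Pc (q + 1) i j)
         else if t = 1 then
          Polynomial.C (Pc q i j) - Polynomial.C (γ (q + 1) * (α (q + 1))⁻¹ * Pc (q + 2) i j)
         else Polynomial.C (Pc (q + 1 - t) i j)) * φ (q + 1 - t) := by
      rw [Matrix.mul_apply, Fintype.sum_prod_type]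
      simp only [hCm, hXdef, Matrix.of_apply, mul_ite, mul_neg, mul_zero,
        Finset.sum_ite_eq', Finset.mem_univ, if_true]
      simp only [show q + 2 - 2 = q from rfl, show q + 2 - 1 = q + 1 from rfl]
      rw [Fin.sum_univ_eq_sum_range (fun t =>
        -((if t = 0 then
          Polynomial.C ((α (q + 1))⁻¹) * ((Polynomial.X - Polynomial.C (β (q + 1))) *
            Polynomial.C (Pc (q + 2) i j)) + Polynomial.C (Pc (q + 1) i j)
         else if t = 1 then
          Polynomial.C (Pc q i j) - Polynomial.C (γ (q + 1) * (α (q + 1))⁻¹ * Pc (q + 2) i j)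
         else Polynomial.C (Pc (q + 1 - t) i j)) * φ (q + 1 - t))) (q + 2 - 1)]
      simp only [show q + 2 - 1 = q + 1 from rfl]
      rw [← Finset.sum_neg_distrib]
    simp only [Matrix.add_apply, Matrix.neg_apply, hL, neg_neg, hP, Matrix.sum_apply,
      Matrix.smul_apply, Matrix.map_apply, smul_eq_mul, hD, Matrix.of_apply]
    rcases q with _ | Q
    · -- k = 2
      rw [if_pos (by norm_num : 0 + 2 - 1 = 1)]
      rw [Finset.sum_range_one]
      rw [Finset.sum_range_succ, Finset.sum_range_succ, Finset.sum_range_one]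
      norm_num
      rw [hφ0] at h2
      try rw [hφ0]
      try simp only [Polynomial.C_mul]
      linear_combination -Polynomial.C (Pc 2 i j) * h2
    · -- k ≥ 3
      rw [if_neg (by omega : ¬(Q + 1 + 2 - 1 = 1))]
      rw [Finset.sum_range_succ', Finset.sum_range_succ']
      rw [Finset.sum_range_succ, show Q + 1 + 2 = Q + 1 + 1 + 1 from rfl,
        Finset.sum_range_succ, Finset.sum_range_succ, Finset.sum_range_succ']
      simp only [Nat.sub_zero, Nat.add_eq_zero, and_false, if_false, one_ne_zero,
        Nat.add_left_cancel_iff, if_true, if_pos rfl, OfNat.ofNat_ne_zero, false_and]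
      simp only [show Q + 1 + 1 = Q + 2 from rfl, show Q + 2 + 1 = Q + 3 from rfl,
        show Q + 1 + 2 = Q + 3 from rfl] at h2 ⊢
      rw [show Q + 2 - (0 + 1) = Q + 1 from by omega]
      have hL2 : (∑ x ∈ Finset.range Q,
          (if x + 1 + 1 = 1 then
              Polynomial.C (Pc (Q + 1) i j)
                - Polynomial.C (γ (Q + 2) * (α (Q + 2))⁻¹ * Pc (Q + 3) i j)
            else Polynomial.C (Pc (Q + 2 - (x + 1 + 1)) i j)) *
            φ (Q + 2 - (x + 1 + 1)))
          = ∑ x ∈ Finset.range Q, φ (x + 1) * Polynomial.C (Pc (x + 1) i j) := by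
        conv_rhs => rw [← Finset.sum_range_reflect]
        refine Finset.sum_congr rfl fun t ht => ?_
        rw [Finset.mem_range] at ht
        rw [if_neg (by omega), show Q + 2 - (t + 1 + 1) = Q - t from by omega,
          show Q - 1 - t + 1 = Q - t from by omega]
        ring
      rw [hL2]
      simp only [Polynomial.C_mul]
      linear_combination -Polynomial.C (Pc (Q + 3) i j) * h2 - Polynomial.C (Pc 0 i j) * hφ0
  -- A⁻¹ * B = X
  have hXeq : A⁻¹ * B = X := by
    rw [← hAX, ← Matrix.mul_assoc, Matrix.nonsing_inv_mul A hAdet, Matrix.one_mul]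
  have hSchur : D + -Cm * A⁻¹ * B = P := by
    rw [Matrix.neg_mul, Matrix.neg_mul, Matrix.mul_assoc, hXeq, hkey]
  refine ⟨hAdet, hSchur, ?_⟩
  -- build the unimodular transformations
  set U₁ : Matrix (Fin p ⊕ (Fin (q + 2 - 1) × Fin m)) (Fin p ⊕ (Fin (q + 2 - 1) × Fin m))
      (Polynomial F) := Matrix.fromBlocks 1 (-(Cm * A⁻¹)) 0 A⁻¹ with hU₁
  set W : Matrix ((Fin (q + 2 - 1) × Fin m) ⊕ Fin m) ((Fin (q + 2 - 1) × Fin m) ⊕ Fin m)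
      (Polynomial F) := Matrix.fromBlocks 1 (-X) 0 1 with hW
  set V₁ : Matrix ((Fin (q + 2 - 1) × Fin m) ⊕ Fin m) (Fin m ⊕ (Fin (q + 2 - 1) × Fin m))
      (Polynomial F) :=
    W.submatrix id (Equiv.sumComm (Fin m) (Fin (q + 2 - 1) × Fin m)) with hV₁
  refine ⟨U₁, V₁, ?_, ?_, ?_⟩
  · rw [hU₁, Matrix.det_fromBlocks_zero₂₁, Matrix.det_one, one_mul]
    exact A.isUnit_nonsing_inv_det hAdet
  · have : V₁.submatrix (Equiv.sumComm (Fin m) (Fin (q + 2 - 1) × Fin m)) id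
        = W.submatrix (Equiv.sumComm (Fin m) (Fin (q + 2 - 1) × Fin m))
            (Equiv.sumComm (Fin m) (Fin (q + 2 - 1) × Fin m)) := by
      rw [hV₁, Matrix.submatrix_submatrix]
      rfl
    rw [this, Matrix.det_submatrix_equiv_self, hW, Matrix.det_fromBlocks_zero₂₁]
    simp
  · have e11 : (1 : Matrix (Fin p) (Fin p) (Polynomial F)) * Cm + -(Cm * A⁻¹) * A = 0 := by
      rw [Matrix.one_mul, Matrix.neg_mul, Matrix.mul_assoc,
        Matrix.nonsing_inv_mul A hAdet, Matrix.mul_one, add_neg_cancel]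
    have e12 : (1 : Matrix (Fin p) (Fin p) (Polynomial F)) * D + -(Cm * A⁻¹) * B = P := by
      rw [Matrix.one_mul, Matrix.neg_mul, Matrix.mul_assoc, hXeq, ← hkey]
    have e21 : (0 : Matrix (Fin (q + 2 - 1) × Fin m) (Fin p) (Polynomial F)) * Cm
        + A⁻¹ * A = 1 := by
      rw [Matrix.zero_mul, Matrix.nonsing_inv_mul A hAdet, zero_add]
    have e22 : (0 : Matrix (Fin (q + 2 - 1) × Fin m) (Fin p) (Polynomial F)) * D
        + A⁻¹ * B = X := by
      rw [Matrix.zero_mul, hXeq, zero_add]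
    have hUC : U₁ * Cφ = Matrix.fromBlocks 0 P 1 X := by
      rw [hU₁, hCφ, Matrix.fromBlocks_multiply, e11, e12, e21, e22]
    have f11 : (0 : Matrix (Fin p) (Fin (q + 2 - 1) × Fin m) (Polynomial F))
        * (1 : Matrix (Fin (q + 2 - 1) × Fin m) (Fin (q + 2 - 1) × Fin m) (Polynomial F))
        + P * (0 : Matrix (Fin m) (Fin (q + 2 - 1) × Fin m) (Polynomial F)) = 0 := by
      simp
    have f12 : (0 : Matrix (Fin p) (Fin (q + 2 - 1) × Fin m) (Polynomial F)) * (-X)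
        + P * (1 : Matrix (Fin m) (Fin m) (Polynomial F)) = P := by
      simp
    have f21 : (1 : Matrix (Fin (q + 2 - 1) × Fin m) (Fin (q + 2 - 1) × Fin m) (Polynomial F))
        * (1 : Matrix (Fin (q + 2 - 1) × Fin m) (Fin (q + 2 - 1) × Fin m) (Polynomial F))
        + X * (0 : Matrix (Fin m) (Fin (q + 2 - 1) × Fin m) (Polynomial F)) = 1 := by
      simp
    have f22 : (1 : Matrix (Fin (q + 2 - 1) × Fin m) (Fin (q + 2 - 1) × Fin m) (Polynomial F))
        * (-X) + X * (1 : Matrix (Fin m) (Fin m) (Polynomial F)) = 0 := by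
      simp
    have hUCW : U₁ * Cφ * W = Matrix.fromBlocks 0 P 1 0 := by
      rw [hUC, hW, Matrix.fromBlocks_multiply, f11, f12, f21, f22]
    have hstep : U₁ * Cφ * V₁ = (U₁ * Cφ * W).submatrix id
        (Equiv.sumComm (Fin m) (Fin (q + 2 - 1) × Fin m)) := by
      rw [hV₁]
      ext i c
      simp [Matrix.mul_apply]
    rw [hstep, hUCW]
    ext i c
    rcases i with i | i <;> rcases c with c | c <;>
      simp [Matrix.fromBlocks, Matrix.one_apply]
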